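/- arXiv:2009.08431 — 3 statements merged into one kernel-verified Lean document; each statement's English description precedes it below -/
import Mathlib

section
/- For fixed real z > 1, the limit as α → 0⁺ of (1/α)·(arctan(√(z² - α²)/α) - arctan(√(1 - α²)/α)) equals 1 - 1/z. -/
open Real Filter Set

lemma key (c α : ℝ) (hc : 1 ≤ c) (h0 : 0 < α) (h1 : α < 1) :
    Real.arctan (Real.sqrt (c ^ 2 - α ^ 2) / α) = π / 2 - Real.arcsin (α / c) := by
  have hcpos : (0:ℝ) < c := lt_of_lt_of_le one_pos hc
  have hac : α < c := lt_of_lt_of_le h1 hc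
  have hsub : (0:ℝ) < c ^ 2 - α ^ 2 := by nlinarith
  have hs : Real.sqrt (c ^ 2 - α ^ 2) > 0 := Real.sqrt_pos.2 hsub
  have harcsin : Real.arcsin (α / c) = Real.arctan (α / Real.sqrt (c ^ 2 - α ^ 2)) := by
    rw [Real.arcsin_eq_arctan ⟨by have := div_pos h0 hcpos; linarith, (div_lt_one hcpos).2 hac⟩ ]
    · congr 1
      have h2 : 1 - (α / c) ^ 2 = (c ^ 2 - α ^ 2) / c ^ 2 := by field_simp
      rw [h2, Real.sqrt_div hsub.le, Real.sqrt_sq hcpos.le]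
      field_simp
  have hinv : Real.sqrt (c ^ 2 - α ^ 2) / α = (α / Real.sqrt (c ^ 2 - α ^ 2))⁻¹ := by
    rw [inv_div]
  rw [hinv, Real.arctan_inv_of_pos (by positivity), harcsin]

theorem kahanian_arccot_limit (z : ℝ) (hz : 1 < z) :
    Tendsto (fun α : ℝ => (1 / α) *
        (Real.arctan (Real.sqrt (z ^ 2 - α ^ 2) / α) -
          Real.arctan (Real.sqrt (1 - α ^ 2) / α)))
      (nhdsWithin 0 {a | 0 < a}) (nhds (1 - 1 / z)) := by
  have hz0 : (0:ℝ) < z := lt_trans one_pos hz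
  set f : ℝ → ℝ := fun α => Real.arcsin α - Real.arcsin (α / z) with hf
  have hd : HasDerivAt f (1 - 1 / z) 0 := by
    have h1 : HasDerivAt Real.arcsin 1 0 := by
      simpa using Real.hasDerivAt_arcsin (x := (0:ℝ)) (by norm_num) (by norm_num)
    have h2 : HasDerivAt (fun α : ℝ => Real.arcsin (α / z)) (1 / z) 0 := by
      have hg : HasDerivAt (fun α : ℝ => α / z) (1 / z) 0 := by
        simpa using (hasDerivAt_id (0:ℝ)).div_const z
      have harc : HasDerivAt Real.arcsin 1 ((0:ℝ) / z) := by
        rw [zero_div]; simpa using Real.hasDerivAt_arcsin (x := (0:ℝ)) (by norm_num) (by norm_num)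
      simpa [Function.comp_def] using harc.comp 0 hg
    exact h1.sub h2
  have hslope : Tendsto (slope f 0) (nhdsWithin 0 {a | (0:ℝ) < a}) (nhds (1 - 1 / z)) := by
    have := hasDerivAt_iff_tendsto_slope.1 hd
    exact this.mono_left (nhdsWithin_mono 0 (fun x hx => ne_of_gt hx))
  refine hslope.congr' ?_
  filter_upwards [Ioo_mem_nhdsGT one_pos] with α hα
  obtain ⟨h0, h1⟩ := hα
  rw [show (1:ℝ) - α ^ 2 = 1 ^ 2 - α ^ 2 by norm_num, key z α hz.le h0 h1, key 1 α le_rfl h0 h1]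
  have hf0 : f 0 = 0 := by simp [hf]
  rw [slope_def_field, hf0, hf]
  simp only [div_one]
  field_simp
  ring
end

section
/- Let α > 0, α ≠ 1, σ ≠ 0, and fix real z. The limit as λ → -σ (λ ∉ {-σ}) of the Kahanian antiderivative -(λ-σ)²/(2λσ(λ+σ) ln α) + (1/(2 ln α))·(α^(2λz)/λ + α^(2σz)/σ - 4α^((λ+σ)z)/(λ+σ)) equals (1/(2σ ln α))·(α^(2σz) - α^(-2σz)) - 2z. -/
open Real Filter

theorem kahanian_limit_lambda_to_neg_sigma (α σ z : ℝ) (hα : 0 < α) (hα1 : α ≠ 1)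
    (hσ : σ ≠ 0) :
    Tendsto (fun l : ℝ =>
        -(l - σ) ^ 2 / (2 * l * σ * (l + σ) * Real.log α) +
          (1 / (2 * Real.log α)) *
            (α ^ (2 * l * z) / l + α ^ (2 * σ * z) / σ - 4 * α ^ ((l + σ) * z) / (l + σ)))
      (nhdsWithin (-σ) {l | l ≠ -σ})
      (nhds ((1 / (2 * σ * Real.log α)) * (α ^ (2 * σ * z) - α ^ (-(2 * σ * z))) - 2 * z)) := by
  have hL : Real.log α ≠ 0 := Real.log_ne_zero_of_pos_of_ne_one hα hα1
  set L := Real.log α with hLdef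
  set g : ℝ → ℝ := fun l => α ^ ((l + σ) * z) with hg
  have hderiv : HasDerivAt g (z * L) (-σ) := by
    have h1 : HasDerivAt (fun l : ℝ => (l + σ) * z) z (-σ) := by
      simpa using ((hasDerivAt_id (-σ)).add_const σ).mul_const z
    have h2 : HasDerivAt (fun l : ℝ => α ^ ((l + σ) * z)) (α ^ ((-σ + σ) * z) * Real.log α * z) (-σ) := ((Real.hasStrictDerivAt_const_rpow hα ((-σ + σ) * z)).hasDerivAt).comp (-σ) h1
    simp only [hg]
    convert h2 using 1
    simp [mul_comm, hLdef]
  have hslope : Tendsto (slope g (-σ)) (nhdsWithin (-σ) {l | l ≠ -σ}) (nhds (z * L)) :=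
    hasDerivAt_iff_tendsto_slope.mp hderiv
  -- the decomposed function
  set F : ℝ → ℝ := fun l =>
    -(l + σ) / (2 * l * σ * L) + (-2 / L) * slope g (-σ) l +
      (1 / (2 * L)) * (α ^ (2 * l * z) / l + α ^ (2 * σ * z) / σ) with hF
  have h1 : Tendsto (fun l : ℝ => -(l + σ) / (2 * l * σ * L)) (nhdsWithin (-σ) {l | l ≠ -σ})
      (nhds 0) := by
    have : ContinuousAt (fun l : ℝ => -(l + σ) / (2 * l * σ * L)) (-σ) := by
      apply ContinuousAt.div (by fun_prop) (by fun_prop)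
      simp [hσ, hL]
    have h := this.tendsto.mono_left (nhdsWithin_le_nhds (s := {l : ℝ | l ≠ -σ}))
    simpa using h
  have h3 : Tendsto (fun l : ℝ => (1 / (2 * L)) * (α ^ (2 * l * z) / l + α ^ (2 * σ * z) / σ))
      (nhdsWithin (-σ) {l | l ≠ -σ})
      (nhds ((1 / (2 * L)) * (α ^ (2 * (-σ) * z) / (-σ) + α ^ (2 * σ * z) / σ))) := by
    have : ContinuousAt (fun l : ℝ => (1 / (2 * L)) * (α ^ (2 * l * z) / l + α ^ (2 * σ * z) / σ))
        (-σ) := by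
      apply ContinuousAt.mul continuousAt_const
      apply ContinuousAt.add _ continuousAt_const
      apply ContinuousAt.div _ continuousAt_id (by simpa using hσ)
      exact (Real.continuousAt_const_rpow hα.ne').comp (by fun_prop)
    exact this.tendsto.mono_left nhdsWithin_le_nhds
  have hFlim : Tendsto F (nhdsWithin (-σ) {l | l ≠ -σ})
      (nhds (0 + (-2 / L) * (z * L) +
        (1 / (2 * L)) * (α ^ (2 * (-σ) * z) / (-σ) + α ^ (2 * σ * z) / σ))) :=
    (h1.add (hslope.const_mul _)).add h3
  have hval : (0 + (-2 / L) * (z * L) +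
      (1 / (2 * L)) * (α ^ (2 * (-σ) * z) / (-σ) + α ^ (2 * σ * z) / σ))
      = (1 / (2 * σ * L)) * (α ^ (2 * σ * z) - α ^ (-(2 * σ * z))) - 2 * z := by
    have he : 2 * (-σ) * z = -(2 * σ * z) := by ring
    rw [he, div_neg]
    field_simp
    ring
  rw [hval] at hFlim
  refine hFlim.congr' ?_
  have hne0 : ∀ᶠ l in nhdsWithin (-σ) {l | l ≠ -σ}, l ≠ 0 :=
    eventually_nhdsWithin_of_eventually_nhds (eventually_ne_nhds (neg_ne_zero.mpr hσ))
  filter_upwards [hne0, self_mem_nhdsWithin] with l hl0 hlσ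
  have hlσ' : l + σ ≠ 0 := by
    intro h; exact hlσ (by linarith)
  have hgval : g (-σ) = 1 := by simp [hg]
  have hslopeval : slope g (-σ) l = (α ^ ((l + σ) * z) - 1) / (l + σ) := by
    rw [slope_def_field, hgval]
    simp [hg, div_eq_div_iff_comm]
  simp only [hF, hslopeval]
  field_simp
  ring
end

section
/- Let α > 0, α ≠ 1, λ ≠ 0, and fix real z. The limit as σ → 0 (σ ≠ 0, σ ≠ -λ) of -(λ-σ)²/(2λσ(λ+σ) ln α) + (1/(2 ln α))·(α^(2λz)/λ + α^(2σz)/σ - 4α^((λ+σ)z)/(λ+σ)) equals z + (1/(2λ ln α))·(α^(2λz) - 4α^(λz) + 3). -/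
open Real Filter

theorem kahanian_limit_sigma_to_zero (α lam z : ℝ) (hα : 0 < α) (hα1 : α ≠ 1)
    (hlam : lam ≠ 0) :
    Tendsto (fun σ : ℝ =>
        -(lam - σ) ^ 2 / (2 * lam * σ * (lam + σ) * Real.log α) +
          (1 / (2 * Real.log α)) *
            (α ^ (2 * lam * z) / lam + α ^ (2 * σ * z) / σ - 4 * α ^ ((lam + σ) * z) / (lam + σ)))
      (nhdsWithin 0 {σ : ℝ | σ ≠ 0 ∧ σ ≠ -lam})
      (nhds (z + (1 / (2 * lam * Real.log α)) *
        (α ^ (2 * lam * z) - 4 * α ^ (lam * z) + 3))) := by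
  set L := Real.log α with hLdef
  have hL : L ≠ 0 := by
    intro h
    rcases Real.log_eq_zero.mp h with h | h | h
    · linarith
    · exact hα1 h
    · linarith
  have hrpow : ∀ x : ℝ, α ^ x = Real.exp (x * L) := fun x => by
    rw [hLdef, Real.rpow_def_of_pos hα, mul_comm]
  -- slope limit for exp
  have hq : Tendsto (fun σ : ℝ => (Real.exp (2 * σ * z * L) - 1) / σ)
      (nhdsWithin (0:ℝ) {σ | σ ≠ 0}) (nhds (2 * z * L)) := by
    have hd : HasDerivAt (fun σ : ℝ => Real.exp (2 * z * L * σ)) (2 * z * L) 0 := by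
      simpa [Function.comp_def] using (Real.hasDerivAt_exp (2 * z * L * 0)).comp 0
        ((hasDerivAt_id (0:ℝ)).const_mul (2 * z * L))
    have heq : (fun σ : ℝ => Real.exp (2 * z * L * σ)) =
        fun σ : ℝ => Real.exp (2 * σ * z * L) := by
      funext σ; ring_nf
    rw [heq] at hd
    have h := hasDerivAt_iff_tendsto_slope.mp hd
    refine h.congr fun σ => ?_
    simp [slope_fun_def, mul_zero, zero_mul, Real.exp_zero, div_eq_inv_mul]
  have hmono : nhdsWithin (0:ℝ) {σ : ℝ | σ ≠ 0 ∧ σ ≠ -lam} ≤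
      nhdsWithin (0:ℝ) {σ | σ ≠ 0} :=
    nhdsWithin_mono 0 fun σ hσ => hσ.1
  have hq' := hq.mono_left hmono
  have hσ0 : Tendsto (fun σ : ℝ => σ) (nhdsWithin (0:ℝ) {σ : ℝ | σ ≠ 0 ∧ σ ≠ -lam})
      (nhds 0) := tendsto_id.mono_left nhdsWithin_le_nhds
  -- the nice function g
  have hg : Tendsto (fun σ : ℝ =>
      (lam * (lam + σ) * ((Real.exp (2 * σ * z * L) - 1) / σ) + (3 * lam - σ)) /
        (2 * lam * (lam + σ) * L) +
      (1 / (2 * L)) * (Real.exp (2 * lam * z * L) / lam -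
        4 * Real.exp ((lam + σ) * z * L) / (lam + σ)))
      (nhdsWithin (0:ℝ) {σ : ℝ | σ ≠ 0 ∧ σ ≠ -lam})
      (nhds ((lam * (lam + 0) * (2 * z * L) + (3 * lam - 0)) /
        (2 * lam * (lam + 0) * L) +
      (1 / (2 * L)) * (Real.exp (2 * lam * z * L) / lam -
        4 * Real.exp ((lam + 0) * z * L) / (lam + 0)))) := by
    have hden : (2 * lam * (lam + 0) * L) ≠ 0 := by
      simp only [add_zero]
      exact mul_ne_zero (mul_ne_zero (mul_ne_zero two_ne_zero hlam) hlam) hL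
    have hlam0 : lam + 0 ≠ 0 := by simpa using hlam
    refine Tendsto.add (Tendsto.div ?_ ?_ hden) (Tendsto.const_mul _ (Tendsto.sub
      tendsto_const_nhds (Tendsto.div ?_ ?_ hlam0)))
    · exact ((tendsto_const_nhds.mul ((tendsto_const_nhds.add hσ0))).mul hq').add
        (tendsto_const_nhds.sub hσ0)
    · exact (tendsto_const_nhds.mul (tendsto_const_nhds.add hσ0)).mul tendsto_const_nhds
    · exact Tendsto.const_mul _ (Real.continuous_exp.continuousAt.tendsto.comp
        (((tendsto_const_nhds.add hσ0).mul tendsto_const_nhds).mul tendsto_const_nhds))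
    · exact tendsto_const_nhds.add hσ0
  -- value equality
  have hval : (lam * (lam + 0) * (2 * z * L) + (3 * lam - 0)) /
        (2 * lam * (lam + 0) * L) +
      (1 / (2 * L)) * (Real.exp (2 * lam * z * L) / lam -
        4 * Real.exp ((lam + 0) * z * L) / (lam + 0)) =
      z + (1 / (2 * lam * L)) * (α ^ (2 * lam * z) - 4 * α ^ (lam * z) + 3) := by
    simp only [add_zero, sub_zero, hrpow]
    field_simp
    ring
  rw [hval] at hg
  refine Tendsto.congr' ?_ hg
  filter_upwards [self_mem_nhdsWithin] with σ hσ
  obtain ⟨h0, hnl⟩ := hσ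
  have hls : lam + σ ≠ 0 := fun h => hnl (by linarith)
  simp only [hrpow]
  field_simp
  ring
end
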